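/- Let u₄(b,x) = 4 - b₁² - b₂² - b₃² - b₁b₂b₃b₄ - b₄² + (b₁b₂ + b₃b₄)x₁ - x₁² + (b₁b₃ + b₂b₄)x₂ - x₂² + (b₂b₃ + b₁b₄)x₃ - x₁x₂x₃ - x₃² with b = (1,0,0,0). Then the hypersurface {u₄(b,x) = 0} ⊂ ℂ³ is smooth: there is no point where u₄ and all three partial derivatives ∂u₄/∂xᵢ vanish simultaneously. -/
import Mathlib


open MvPolynomial

/-- The four-holed sphere polynomial `u₄(b, x)` with boundary traces `b = (b₁,b₂,b₃,b₄)`. -/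
noncomputable def u4 (b1 b2 b3 b4 : ℂ) : MvPolynomial (Fin 3) ℂ :=
  C (4 - b1 ^ 2 - b2 ^ 2 - b3 ^ 2 - b1 * b2 * b3 * b4 - b4 ^ 2)
    + C (b1 * b2 + b3 * b4) * X 0 - X 0 ^ 2
    + C (b1 * b3 + b2 * b4) * X 1 - X 1 ^ 2
    + C (b2 * b3 + b1 * b4) * X 2 - X 0 * X 1 * X 2 - X 2 ^ 2

/-- For `b = (1,0,0,0)`, the hypersurface `{u₄(b, x) = 0} ⊂ ℂ³` is smooth: there is no
point where `u₄` and all three partial derivatives vanish simultaneously. -/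
theorem stmt_12 (b1 b2 b3 b4 : ℂ) (hb : b1 = 1 ∧ b2 = 0 ∧ b3 = 0 ∧ b4 = 0) :
    ¬ ∃ p : Fin 3 → ℂ,
        eval p (u4 b1 b2 b3 b4) = 0 ∧ ∀ i : Fin 3, eval p (pderiv i (u4 b1 b2 b3 b4)) = 0 := by
  obtain ⟨rfl, rfl, rfl, rfl⟩ := hb
  rintro ⟨p, h0, hd⟩
  have h1 := hd 0
  have h2 := hd 1
  have h3 := hd 2
  set a := p 0
  set b := p 1
  set c := p 2
  have hC : (4 - (1:ℂ) ^ 2 - 0 ^ 2 - 0 ^ 2 - 1 * 0 * 0 * 0 - 0 ^ 2) = 3 := by norm_num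
  simp only [u4, hC, map_sub, map_add, map_mul, map_pow, eval_C, eval_X, pderiv_X,
    Derivation.leibniz, Derivation.leibniz_pow, pderiv_C, smul_eq_mul,
    Pi.single_apply, map_smul, map_one, map_zero] at h0 h1 h2 h3
  norm_num [Fin.ext_iff] at h0 h1 h2 h3
  -- h0 : 3 - a^2 - b^2 - a*b*c - c^2 = 0 (some form)
  have hab : a * b = -2 * c := by linear_combination -h3
  have hbc : b * c = -2 * a := by linear_combination -h1
  have hac : a * c = -2 * b := by linear_combination -h2
  have ht : a * b * c = -6 := by linear_combination 2*h0 - a*h1 - b*h2 - c*h3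
  have ht2 : (a * b * c) ^ 2 = -8 * (a * b * c) := by
    calc (a * b * c) ^ 2 = (a*b) * (b*c) * (a*c) := by ring
    _ = (-2*c) * (-2*a) * (-2*b) := by rw [hab, hbc, hac]
    _ = -8 * (a * b * c) := by ring
  have : (12 : ℂ) = 0 := by linear_combination (a*b*c + 2) * ht - ht2
  norm_num at this
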